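/- Let P(λ) = Σ_{i=0}^k P_i λ^i with P_i ∈ ℝ^{n×n} (n ≥ 1) be a matrix polynomial of degree k ≥ 2, and for 1 ≤ j ≤ ⌈k/2⌉ set DG_j(P) := G_j(P) ∩ G_{k−j+1}(P). Then DG_1(P) ⊊ DG_2(P) ⊊ … ⊊ DG_{⌈k/2⌉}(P), i.e. for every j with 1 ≤ j < ⌈k/2⌉ the inclusion DG_j(P) ⊆ DG_{j+1}(P) holds and is strict. -/

import Mathlib

open Matrix Polynomial
open scoped Kronecker

noncomputable section

/-- `Λ_j(λ)` as a `(j+1) × 1` matrix of real polynomials, with `i`-th entry `λ^{j-i}`. -/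
def Lam (j : ℕ) : Matrix (Fin (j + 1)) (Fin 1) (Polynomial ℝ) :=
  Matrix.of fun i _ => X ^ (j - (i : ℕ))

/-- `L_κ(λ)`, the `κ × (κ+1)` pencil with `-1` on the diagonal and `λ` on the superdiagonal. -/
def Lk (κ : ℕ) : Matrix (Fin κ) (Fin (κ + 1)) (Polynomial ℝ) :=
  Matrix.of fun i j => if (j : ℕ) = (i : ℕ) then -1 else if (j : ℕ) = (i : ℕ) + 1 then X else 0

/-- The matrix pencil `λ·A + B` as a matrix of real polynomials. -/
def pencilM {ρ γ : Type*} (A B : Matrix ρ γ ℝ) : Matrix ρ γ (Polynomial ℝ) :=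
  Matrix.of fun i j => X * C (A i j) + C (B i j)

/-- The matrix polynomial `Σ_{i=0}^k Pc i · λ^i` as a matrix of real polynomials. -/
def polyOf (m n k : ℕ) (Pc : ℕ → Matrix (Fin m) (Fin n) ℝ) :
    Matrix (Fin m) (Fin n) (Polynomial ℝ) :=
  Matrix.of fun i j => ∑ t ∈ Finset.range (k + 1), X ^ t * C (Pc t i j)

/-- The flat `(n + ε'n) × kn` matrix `(Λ_{η'}(λ)ᵀ ⊗ I_n) ⊕ I_{ε'n}` (with `ε' = k - 1 - η'`),
acting on the left in the block Kronecker ansatz equation. -/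
def Eleft (n k η' : ℕ) : Matrix (Fin (k - η') × Fin n) (Fin k × Fin n) (Polynomial ℝ) :=
  Matrix.of fun p q =>
    if p.2 = q.2 ∧ (p.1 : ℕ) = 0 ∧ (q.1 : ℕ) ≤ η' then X ^ (η' - (q.1 : ℕ))
    else if p.2 = q.2 ∧ (q.1 : ℕ) = η' + (p.1 : ℕ) then 1
    else 0

/-- The flat `kn × (n + η'n)` matrix `(Λ_{ε'}(λ) ⊗ I_n) ⊕ I_{η'n}` (with `ε' = k - 1 - η'`),
acting on the right in the block Kronecker ansatz equation. -/
def Eright (n k η' : ℕ) : Matrix (Fin k × Fin n) (Fin (η' + 1) × Fin n) (Polynomial ℝ) :=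
  Matrix.of fun p q =>
    if p.2 = q.2 ∧ (q.1 : ℕ) = 0 ∧ (p.1 : ℕ) ≤ k - 1 - η' then X ^ (k - 1 - η' - (p.1 : ℕ))
    else if p.2 = q.2 ∧ (p.1 : ℕ) = (k - 1 - η') + (q.1 : ℕ) then 1
    else 0

/-- The right-hand side `(α · P(λ)) ⊕ 0` of the block Kronecker ansatz equation. -/
def GRHS (n k η' : ℕ) (α : ℝ) (Pm : Matrix (Fin n) (Fin n) (Polynomial ℝ)) :
    Matrix (Fin (k - η') × Fin n) (Fin (η' + 1) × Fin n) (Polynomial ℝ) :=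
  Matrix.of fun p q =>
    if (p.1 : ℕ) = 0 ∧ (q.1 : ℕ) = 0 then C α * Pm p.2 q.2 else 0

/-- Membership of the pencil `λ·p.1 + p.2` in the block Kronecker ansatz space
`G_{η'+1}(P)` for the `n × n` matrix polynomial with coefficients `Pc` of degree `k`. -/
def memG (n k η' : ℕ) (Pc : ℕ → Matrix (Fin n) (Fin n) ℝ)
    (p : Matrix (Fin k × Fin n) (Fin k × Fin n) ℝ ×
         Matrix (Fin k × Fin n) (Fin k × Fin n) ℝ) : Prop :=
  ∃ α : ℝ,
    Eleft n k η' * pencilM p.1 p.2 * Eright n k η' = GRHS n k η' α (polyOf n n k Pc)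



lemma aux_sum_indicator {M : Type*} [AddCommMonoid M] (K m : ℕ) (h : m + 1 ≤ K) (f : ℕ → M) :
    ∑ b ∈ Finset.range K, (if b ≤ m then f b else 0) = ∑ b ∈ Finset.range (m+1), f b := by
  rw [← Finset.sum_subset (Finset.range_subset_range.2 h)
      (fun x _ hx => by
        simp only [Finset.mem_range, not_lt] at hx
        rw [if_neg (by omega)])]
  exact Finset.sum_congr rfl fun x hx =>
    if_pos (by have := Finset.mem_range.1 hx; omega)

lemma aux_tel_build (f g : ℕ → ℝ) (m : ℕ) (f0 : f 0 = 0) (hg : ∀ y < m, g y = -f (y+1)) :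
    ∑ b ∈ Finset.range (m+1), X ^ (m - b) * (X * C (f b) + C (g b)) = C (g m) := by
  induction m with
  | zero => simp [f0]
  | succ m ih =>
    rw [Finset.sum_range_succ]
    have h1 : ∑ b ∈ Finset.range (m+1), X ^ (m + 1 - b) * (X * C (f b) + C (g b))
        = X * ∑ b ∈ Finset.range (m+1), X ^ (m - b) * (X * C (f b) + C (g b)) := by
      rw [Finset.mul_sum]
      refine Finset.sum_congr rfl fun b hb => ?_
      have hb' : b ≤ m := Nat.lt_succ_iff.mp (Finset.mem_range.1 hb)
      have : m + 1 - b = (m - b) + 1 := by omega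
      rw [this, pow_succ]; ring
    rw [h1, ih (fun y hy => hg y (by omega)), hg m (by omega)]
    simp only [Nat.sub_self, pow_zero, one_mul, map_neg]
    ring

lemma aux_tel_extract (f g : ℕ → ℝ) :
    ∀ (m : ℕ) (t : ℝ),
      (∑ b ∈ Finset.range (m+1), X ^ (m - b) * (X * C (f b) + C (g b))) = C t →
      f 0 = 0 ∧ g m = t ∧ ∀ y < m, g y = -f (y+1) := by
  intro m
  induction m with
  | zero =>
    intro t h
    rw [Finset.sum_range_one] at h
    norm_num at h
    have h1 := congrArg (fun p => Polynomial.coeff p 1) h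
    have h0 := congrArg (fun p => Polynomial.coeff p 0) h
    simp [coeff_C] at h1 h0
    exact ⟨h1, h0, fun y hy => absurd hy (Nat.not_lt_zero y)⟩
  | succ m ih =>
    intro t h
    rw [Finset.sum_range_succ] at h
    have h1 : ∑ b ∈ Finset.range (m+1), X ^ (m + 1 - b) * (X * C (f b) + C (g b))
        = X * ∑ b ∈ Finset.range (m+1), X ^ (m - b) * (X * C (f b) + C (g b)) := by
      rw [Finset.mul_sum]
      refine Finset.sum_congr rfl fun b hb => ?_
      have hb' : b ≤ m := Nat.lt_succ_iff.mp (Finset.mem_range.1 hb)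
      have : m + 1 - b = (m - b) + 1 := by omega
      rw [this, pow_succ]; ring
    rw [h1, Nat.sub_self, pow_zero, one_mul] at h
    set S := ∑ b ∈ Finset.range (m+1), X ^ (m - b) * (X * C (f b) + C (g b)) with hS
    have hgm : g (m+1) = t := by
      have h0 := congrArg (fun p => Polynomial.coeff p 0) h
      simp only [coeff_add, mul_coeff_zero, coeff_X_zero, zero_mul, coeff_C_zero,
        zero_add] at h0
      exact h0
    have h2 : X * (S + C (f (m+1))) = X * 0 := by
      rw [mul_zero, mul_add]
      have hc : C (g (m+1)) = C t := congrArg _ hgm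
      linear_combination h - hc
    have h3 : S = C (-f (m+1)) := by
      have h4 := mul_left_cancel₀ (Polynomial.X_ne_zero (R := ℝ)) h2
      rw [map_neg]
      exact eq_neg_of_add_eq_zero_left h4
    obtain ⟨hf0, hgm2, hys⟩ := ih _ h3
    refine ⟨hf0, hgm, fun y hy => ?_⟩
    rcases Nat.lt_succ_iff_lt_or_eq.1 hy with h5 | h5
    · exact hys y h5
    · subst h5; exact hgm2

section Entry

variable {n k : ℕ}

/-- protected scalar accessor -/
def av (A : Matrix (Fin k × Fin n) (Fin k × Fin n) ℝ) (i i' : Fin n) (a b : ℕ) : ℝ :=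
  if h : a < k ∧ b < k then A (⟨a, h.1⟩, i) (⟨b, h.2⟩, i') else 0

/-- protected pencil entry -/
def pv (A B : Matrix (Fin k × Fin n) (Fin k × Fin n) ℝ) (i i' : Fin n) (a b : ℕ) :
    Polynomial ℝ :=
  X * C (av A i i' a b) + C (av B i i' a b)

lemma pencil_apply (A B : Matrix (Fin k × Fin n) (Fin k × Fin n) ℝ) (a b : Fin k) (i i' : Fin n) :
    pencilM A B (a, i) (b, i') = pv A B i i' a b := by
  unfold pv av
  rw [dif_pos ⟨a.isLt, b.isLt⟩, dif_pos ⟨a.isLt, b.isLt⟩]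
  rfl

lemma entry_sum (η : ℕ) (A B : Matrix (Fin k × Fin n) (Fin k × Fin n) ℝ)
    (p : Fin (k - η) × Fin n) (q : Fin (η + 1) × Fin n) :
    (Eleft n k η * pencilM A B * Eright n k η) p q
      = ∑ a : Fin k, ∑ b : Fin k,
          Eleft n k η p (a, p.2) * (pv A B p.2 q.2 a b * Eright n k η (b, q.2) q) := by
  rw [Matrix.mul_apply]
  simp only [Matrix.mul_apply]
  rw [Fintype.sum_prod_type]
  have hcol : ∀ (v1 : Fin k) (v2 : Fin n),
      (∑ u : Fin k × Fin n, Eleft n k η p u * pencilM A B u (v1, v2)) * Eright n k η (v1, v2) q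
      = if v2 = q.2 then
          (∑ u : Fin k × Fin n, Eleft n k η p u * pencilM A B u (v1, q.2))
            * Eright n k η (v1, q.2) q else 0 := by
    intro v1 v2
    by_cases h : v2 = q.2
    · subst h; rw [if_pos rfl]
    · rw [if_neg h]
      have : Eright n k η (v1, v2) q = 0 := by
        simp [Eright, h]
      rw [this, mul_zero]
  have hrow : ∀ (v1 u1 : Fin k) (u2 : Fin n),
      Eleft n k η p (u1, u2) * pencilM A B (u1, u2) (v1, q.2)
      = if u2 = p.2 then Eleft n k η p (u1, p.2) * pencilM A B (u1, p.2) (v1, q.2) else 0 := by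
    intro v1 u1 u2
    by_cases h : u2 = p.2
    · subst h; rw [if_pos rfl]
    · rw [if_neg h]
      have : Eleft n k η p (u1, u2) = 0 := by
        simp [Eleft, show ¬ p.2 = u2 from fun hh => h hh.symm]
      rw [this, zero_mul]
  calc ∑ v1 : Fin k, ∑ v2 : Fin n,
        (∑ u : Fin k × Fin n, Eleft n k η p u * pencilM A B u (v1, v2)) * Eright n k η (v1, v2) q
      = ∑ v1 : Fin k,
        (∑ u : Fin k × Fin n, Eleft n k η p u * pencilM A B u (v1, q.2)) * Eright n k η (v1, q.2) q := by
        refine Finset.sum_congr rfl fun v1 _ => ?_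
        rw [Finset.sum_congr rfl fun v2 _ => hcol v1 v2]
        simp
    _ = ∑ v1 : Fin k,
        (∑ u1 : Fin k, Eleft n k η p (u1, p.2) * pencilM A B (u1, p.2) (v1, q.2)) * Eright n k η (v1, q.2) q := by
        refine Finset.sum_congr rfl fun v1 _ => ?_
        congr 1
        rw [Fintype.sum_prod_type]
        rw [Finset.sum_congr rfl fun u1 _ => Finset.sum_congr rfl fun u2 _ => hrow v1 u1 u2]
        simp
    _ = ∑ a : Fin k, ∑ b : Fin k,
          Eleft n k η p (a, p.2) * (pv A B p.2 q.2 a b * Eright n k η (b, q.2) q) := by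
        rw [Finset.sum_comm]
        refine Finset.sum_congr rfl fun a _ => ?_
        rw [Finset.sum_mul]
        refine Finset.sum_congr rfl fun b _ => ?_
        rw [pencil_apply, mul_assoc]

lemma fin_lt_of_p {k η : ℕ} (p1 : Fin (k - η)) : η + (p1 : ℕ) < k := by
  have := p1.isLt; omega

lemma fin_lt_of_q {k η : ℕ} (hk : η ≤ k - 1) (hk1 : 1 ≤ k) (q1 : Fin (η + 1)) :
    k - 1 - η + (q1 : ℕ) < k := by
  have := q1.isLt; omega

variable {A B : Matrix (Fin k × Fin n) (Fin k × Fin n) ℝ}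

lemma eleft_ne (η : ℕ) (p : Fin (k - η) × Fin n) (hp : (p.1 : ℕ) ≠ 0) (a : Fin k) :
    Eleft n k η p (a, p.2) = if (a : ℕ) = η + (p.1 : ℕ) then 1 else 0 := by
  simp [Eleft, hp]

lemma eleft_z (η : ℕ) (p : Fin (k - η) × Fin n) (hp : (p.1 : ℕ) = 0) (a : Fin k) :
    Eleft n k η p (a, p.2) = if (a : ℕ) ≤ η then X ^ (η - (a : ℕ)) else 0 := by
  by_cases h : (a : ℕ) ≤ η
  · simp [Eleft, hp, h]
  · simp only [Eleft, Matrix.of_apply, hp]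
    rw [if_neg (by simp [h]), if_neg (by simp; omega), if_neg h]

lemma eright_ne (η : ℕ) (q : Fin (η + 1) × Fin n) (hq : (q.1 : ℕ) ≠ 0) (b : Fin k) :
    Eright n k η (b, q.2) q = if (b : ℕ) = k - 1 - η + (q.1 : ℕ) then 1 else 0 := by
  simp [Eright, hq, show q.1 ≠ 0 by simpa using hq]

lemma eright_z (η : ℕ) (q : Fin (η + 1) × Fin n) (hq : (q.1 : ℕ) = 0) (b : Fin k) :
    Eright n k η (b, q.2) q = if (b : ℕ) ≤ k - 1 - η then X ^ (k - 1 - η - (b : ℕ)) else 0 := by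
  by_cases h : (b : ℕ) ≤ k - 1 - η
  · simp [Eright, hq, h, show q.1 = 0 by simpa using hq]
  · simp only [Eright, Matrix.of_apply, hq]
    rw [if_neg (by simp [h]), if_neg (by simp; omega), if_neg h]

lemma sum_fin_delta {k : ℕ} (m : ℕ) (hm : m < k) (f : Fin k → Polynomial ℝ) :
    (∑ x : Fin k, f x * (if (x : ℕ) = m then 1 else 0)) = f ⟨m, hm⟩ := by
  rw [Finset.sum_eq_single (⟨m, hm⟩ : Fin k)]
  · simp
  · intro b _ hb; rw [if_neg (fun hh => hb (Fin.ext hh)), mul_zero]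
  · intro h; exact absurd (Finset.mem_univ _) h

lemma sum_fin_delta' {k : ℕ} (m : ℕ) (hm : m < k) (f : Fin k → Polynomial ℝ) :
    (∑ x : Fin k, (if (x : ℕ) = m then 1 else 0) * f x) = f ⟨m, hm⟩ := by
  rw [Finset.sum_eq_single (⟨m, hm⟩ : Fin k)]
  · simp
  · intro b _ hb; rw [if_neg (fun hh => hb (Fin.ext hh)), zero_mul]
  · intro h; exact absurd (Finset.mem_univ _) h

lemma entry_rc (η : ℕ) (p : Fin (k - η) × Fin n) (q : Fin (η + 1) × Fin n)
    (hp : (p.1 : ℕ) ≠ 0) (hq : (q.1 : ℕ) ≠ 0) :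
    (Eleft n k η * pencilM A B * Eright n k η) p q
      = pv A B p.2 q.2 (η + (p.1 : ℕ)) (k - 1 - η + (q.1 : ℕ)) := by
  have hk1 : 1 ≤ k := by have := p.1.isLt; omega
  have hη : η ≤ k - 1 := by have := p.1.isLt; omega
  rw [entry_sum]
  simp only [eleft_ne η p hp, eright_ne η q hq, ← Finset.mul_sum]
  have hinner : ∀ a : Fin k,
      (∑ b : Fin k, pv A B p.2 q.2 (a:ℕ) (b:ℕ) * (if (b : ℕ) = k - 1 - η + (q.1:ℕ) then (1:Polynomial ℝ) else 0))
        = pv A B p.2 q.2 (a:ℕ) (k - 1 - η + (q.1:ℕ)) :=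
    fun a => sum_fin_delta _ (fin_lt_of_q hη hk1 q.1) _
  simp only [hinner]
  exact sum_fin_delta' _ (fin_lt_of_p p.1) _

lemma entry_r0 (η : ℕ) (p : Fin (k - η) × Fin n) (q : Fin (η + 1) × Fin n)
    (hp : (p.1 : ℕ) ≠ 0) (hq : (q.1 : ℕ) = 0) :
    (Eleft n k η * pencilM A B * Eright n k η) p q
      = ∑ b ∈ Finset.range (k - η), X ^ (k - 1 - η - b) * pv A B p.2 q.2 (η + (p.1 : ℕ)) b := by
  have hk1 : 1 ≤ k := by have := p.1.isLt; omega
  have hη : η ≤ k - 1 := by have := p.1.isLt; omega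
  rw [entry_sum]
  simp only [eleft_ne η p hp, eright_z η q hq, ← Finset.mul_sum]
  rw [sum_fin_delta' _ (fin_lt_of_p p.1) _]
  have := Fin.sum_univ_eq_sum_range
    (fun b => pv A B p.2 q.2 (η + (p.1 : ℕ)) b *
      (if b ≤ k - 1 - η then X ^ (k - 1 - η - b) else 0)) k
  rw [this]
  simp only [mul_ite, mul_zero]
  rw [aux_sum_indicator k (k - 1 - η) (by omega) _]
  rw [show Finset.range (k - η) = Finset.range ((k - 1 - η) + 1) from by
    rw [show (k - 1 - η) + 1 = k - η by omega]]
  exact Finset.sum_congr rfl fun b _ => mul_comm _ _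

lemma entry_0c (η : ℕ) (p : Fin (k - η) × Fin n) (q : Fin (η + 1) × Fin n)
    (hp : (p.1 : ℕ) = 0) (hq : (q.1 : ℕ) ≠ 0) :
    (Eleft n k η * pencilM A B * Eright n k η) p q
      = ∑ a ∈ Finset.range (η + 1), X ^ (η - a) * pv A B p.2 q.2 a (k - 1 - η + (q.1 : ℕ)) := by
  have hk1 : 1 ≤ k := by have := p.1.isLt; omega
  have hη : η ≤ k - 1 := by have := p.1.isLt; omega
  rw [entry_sum]
  simp only [eleft_z η p hp, eright_ne η q hq, ← Finset.mul_sum]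
  have hinner : ∀ a : Fin k,
      (∑ b : Fin k, pv A B p.2 q.2 (a:ℕ) (b:ℕ) * (if (b : ℕ) = k - 1 - η + (q.1:ℕ) then (1:Polynomial ℝ) else 0))
        = pv A B p.2 q.2 (a:ℕ) (k - 1 - η + (q.1:ℕ)) :=
    fun a => sum_fin_delta _ (fin_lt_of_q hη hk1 q.1) _
  simp only [hinner]
  have := Fin.sum_univ_eq_sum_range
    (fun a => (if a ≤ η then X ^ (η - a) else 0) * pv A B p.2 q.2 a (k - 1 - η + (q.1 : ℕ))) k
  rw [this]
  simp only [ite_mul, zero_mul]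
  exact aux_sum_indicator k η (by omega) _

lemma entry_00 (η : ℕ) (p : Fin (k - η) × Fin n) (q : Fin (η + 1) × Fin n)
    (hp : (p.1 : ℕ) = 0) (hq : (q.1 : ℕ) = 0) :
    (Eleft n k η * pencilM A B * Eright n k η) p q
      = ∑ a ∈ Finset.range (η + 1), ∑ b ∈ Finset.range (k - η),
          X ^ (η - a) * (X ^ (k - 1 - η - b) * pv A B p.2 q.2 a b) := by
  have hk1 : 1 ≤ k := by have := p.1.isLt; omega
  have hη : η ≤ k - 1 := by have := p.1.isLt; omega
  rw [entry_sum]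
  simp only [eleft_z η p hp, eright_z η q hq, ← Finset.mul_sum]
  have hinner : ∀ a : Fin k,
      (∑ b : Fin k, pv A B p.2 q.2 (a:ℕ) (b:ℕ) * (if (b : ℕ) ≤ k - 1 - η then X ^ (k - 1 - η - (b:ℕ)) else 0))
        = ∑ b ∈ Finset.range (k - η), X ^ (k - 1 - η - b) * pv A B p.2 q.2 (a:ℕ) b := by
    intro a
    have := Fin.sum_univ_eq_sum_range
      (fun b => pv A B p.2 q.2 (a:ℕ) b * (if b ≤ k - 1 - η then X ^ (k - 1 - η - b) else 0)) k
    rw [this]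
    simp only [mul_ite, mul_zero]
    rw [aux_sum_indicator k (k - 1 - η) (by omega) _]
    rw [show Finset.range (k - η) = Finset.range ((k - 1 - η) + 1) from by
      rw [show (k - 1 - η) + 1 = k - η by omega]]
    exact Finset.sum_congr rfl fun b _ => mul_comm _ _
  simp only [hinner]
  have := Fin.sum_univ_eq_sum_range
    (fun a => (if a ≤ η then X ^ (η - a) else 0) *
      ∑ b ∈ Finset.range (k - η), X ^ (k - 1 - η - b) * pv A B p.2 q.2 a b) k
  rw [this]
  simp only [ite_mul, zero_mul]
  rw [aux_sum_indicator k η (by omega) _]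

lemma pv_zero {a b : ℝ} (h : (X * C a + C b : Polynomial ℝ) = 0) : a = 0 ∧ b = 0 := by
  have h1 := congrArg (fun p => Polynomial.coeff p 1) h
  have h0 := congrArg (fun p => Polynomial.coeff p 0) h
  simp [coeff_C] at h1 h0
  exact ⟨h1, h0⟩

lemma av_out {A : Matrix (Fin k × Fin n) (Fin k × Fin n) ℝ} {i i' : Fin n} {a b : ℕ}
    (h : k ≤ a ∨ k ≤ b) : av A i i' a b = 0 := by
  unfold av
  rw [dif_neg (by omega)]

section Extract

variable {η : ℕ} {α : ℝ} {Pm : Matrix (Fin n) (Fin n) (Polynomial ℝ)}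
variable (hη : η + 1 ≤ k)
variable (H : Eleft n k η * pencilM A B * Eright n k η = GRHS n k η α Pm)

include hη H

lemma ext_Z : ∀ (i i' : Fin n) (x y : ℕ), η < x → k - η ≤ y →
    av A i i' x y = 0 ∧ av B i i' x y = 0 := by
  intro i i' x y hx hy
  by_cases hxk : x < k
  case neg => exact ⟨av_out (Or.inl (by omega)), av_out (Or.inl (by omega))⟩
  by_cases hyk : y < k
  case neg => exact ⟨av_out (Or.inr (by omega)), av_out (Or.inr (by omega))⟩
  have hr : x - η < k - η := by omega
  have hc : y - (k - 1 - η) < η + 1 := by omega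
  have heq := congrFun (congrFun H (⟨x - η, hr⟩, i)) (⟨y - (k - 1 - η), hc⟩, i')
  rw [entry_rc η _ _ (by simp; omega) (by simp; omega)] at heq
  have hx' : η + (x - η) = x := by omega
  have hy' : k - 1 - η + (y - (k - 1 - η)) = y := by omega
  rw [hx', hy'] at heq
  have hrhs : GRHS n k η α Pm (⟨x - η, hr⟩, i) (⟨y - (k - 1 - η), hc⟩, i') = 0 := by
    simp [GRHS]; intro h1 h2; omega
  rw [hrhs] at heq
  exact pv_zero heq

lemma ext_row : ∀ (i i' : Fin n) (x : ℕ), η < x →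
    (av A i i' x 0 = 0 ∧ ∀ y : ℕ, av B i i' x y = -av A i i' x (y + 1)) := by
  intro i i' x hx
  by_cases hxk : x < k
  case neg =>
    refine ⟨av_out (Or.inl (by omega)), fun y => ?_⟩
    rw [av_out (Or.inl (by omega)), av_out (Or.inl (by omega)), neg_zero]
  have hr : x - η < k - η := by omega
  have heq := congrFun (congrFun H (⟨x - η, hr⟩, i)) (⟨0, by omega⟩, i')
  rw [entry_r0 η _ _ (by simp; omega) (by simp)] at heq
  have hrhs : GRHS n k η α Pm (⟨x - η, hr⟩, i) (⟨0, by omega⟩, i') = 0 := by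
    simp [GRHS]; intro h1; omega
  rw [hrhs] at heq
  have hx' : η + (x - η) = x := by omega
  rw [hx'] at heq
  rw [show Finset.range (k - η) = Finset.range ((k - 1 - η) + 1) from by
    rw [show (k - 1 - η) + 1 = k - η by omega]] at heq
  simp only [pv] at heq
  have := aux_tel_extract (fun b => av A i i' x b) (fun b => av B i i' x b)
    (k - 1 - η) 0 (by rw [map_zero]; exact heq)
  obtain ⟨h0, hend, hmid⟩ := this
  refine ⟨h0, fun y => ?_⟩
  rcases lt_trichotomy y (k - 1 - η) with hy | hy | hy
  · exact hmid y hy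
  · subst hy
    rw [hend]
    by_cases hηk : η + 1 < k
    · rw [(ext_Z hη H i i' x (k - 1 - η + 1) hx (by omega)).1, neg_zero]
    · rw [av_out (Or.inr (by omega)), neg_zero]
  · rw [(ext_Z hη H i i' x y hx (by omega)).2,
      (ext_Z hη H i i' x (y + 1) hx (by omega)).1, neg_zero]

lemma ext_col : ∀ (i i' : Fin n) (y : ℕ), k - η ≤ y →
    (av A i i' 0 y = 0 ∧ ∀ x : ℕ, av B i i' x y = -av A i i' (x + 1) y) := by
  intro i i' y hy
  by_cases hyk : y < k
  case neg =>
    refine ⟨av_out (Or.inr (by omega)), fun x => ?_⟩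
    rw [av_out (Or.inr (by omega)), av_out (Or.inr (by omega)), neg_zero]
  have hc : y - (k - 1 - η) < η + 1 := by omega
  have heq := congrFun (congrFun H (⟨0, by omega⟩, i)) (⟨y - (k - 1 - η), hc⟩, i')
  rw [entry_0c η _ _ (by simp) (by simp; omega)] at heq
  have hrhs : GRHS n k η α Pm (⟨0, by omega⟩, i) (⟨y - (k - 1 - η), hc⟩, i') = 0 := by
    simp [GRHS]; intro h1; omega
  rw [hrhs] at heq
  have hy' : k - 1 - η + (y - (k - 1 - η)) = y := by omega
  rw [hy'] at heq
  simp only [pv] at heq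
  have := aux_tel_extract (fun a => av A i i' a y) (fun a => av B i i' a y)
    η 0 (by rw [map_zero]; exact heq)
  obtain ⟨h0, hend, hmid⟩ := this
  refine ⟨h0, fun x => ?_⟩
  rcases lt_trichotomy x η with hx | hx | hx
  · exact hmid x hx
  · subst hx
    rw [hend]
    rw [(ext_Z hη H i i' (x + 1) y (by omega) (by omega)).1, neg_zero]
  · rw [(ext_Z hη H i i' x y (by omega) (by omega)).2,
      (ext_Z hη H i i' (x + 1) y (by omega) (by omega)).1, neg_zero]

lemma ext_P : ∀ (i i' : Fin n),
    (∑ a ∈ Finset.range (η + 1), ∑ b ∈ Finset.range (k - η),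
      X ^ (η - a) * (X ^ (k - 1 - η - b) * pv A B i i' a b)) = C α * Pm i i' := by
  intro i i'
  have heq := congrFun (congrFun H (⟨0, by omega⟩, i)) (⟨0, by omega⟩, i')
  rw [entry_00 η _ _ (by simp) (by simp)] at heq
  have hrhs : GRHS n k η α Pm (⟨0, by omega⟩, i) (⟨0, by omega⟩, i') = C α * Pm i i' := by
    simp [GRHS]
  rw [hrhs] at heq
  exact heq

end Extract

section Interval

variable {e0 e2 : ℕ} {α β : ℝ} {Pm Pm' : Matrix (Fin n) (Fin n) (Polynomial ℝ)}
variable (h02 : e0 ≤ e2) (h2k : e2 + 1 ≤ k)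
variable (H0 : Eleft n k e0 * pencilM A B * Eright n k e0 = GRHS n k e0 α Pm)
variable (H2 : Eleft n k e2 * pencilM A B * Eright n k e2 = GRHS n k e2 β Pm')

include h02 h2k H0 H2

lemma ZRA : ∀ (i i' : Fin n) (a c : ℕ), e0 + 1 ≤ a → k - e2 ≤ c → k + 1 ≤ a + c →
    av A i i' a c = 0 := by
  have h0k : e0 + 1 ≤ k := by omega
  have hZR : ∀ (d : ℕ) (i i' : Fin n) (c : ℕ), k - e2 ≤ c → k + 1 ≤ (e0 + 1 + d) + c →
      av A i i' (e0 + 1 + d) c = 0 := by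
    intro d
    induction d with
    | zero =>
      intro i i' c _ hsum
      exact (ext_Z h0k H0 i i' (e0 + 1) c (by omega) (by omega)).1
    | succ d ih =>
      intro i i' c hc hsum
      have h1 : av B i i' (e0 + 1 + d) c = -av A i i' (e0 + 1 + d + 1) c :=
        (ext_col h2k H2 i i' c hc).2 (e0 + 1 + d)
      have h2 : av B i i' (e0 + 1 + d) c = -av A i i' (e0 + 1 + d) (c + 1) :=
        (ext_row h0k H0 i i' (e0 + 1 + d) (by omega)).2 c
      have h3 : av A i i' (e0 + 1 + d) (c + 1) = 0 := ih i i' (c + 1) (by omega) (by omega)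
      have : av A i i' (e0 + 1 + d + 1) c = 0 := by
        have h5 := h1.symm.trans h2
        rw [h3, neg_zero] at h5
        exact neg_eq_zero.mp h5
      rw [show e0 + 1 + (d + 1) = e0 + 1 + d + 1 by omega]
      exact this
  intro i i' a c ha hc hsum
  rw [show a = e0 + 1 + (a - e0 - 1) by omega]
  exact hZR (a - e0 - 1) i i' c hc (by omega)

lemma ZRB : ∀ (i i' : Fin n) (a c : ℕ), e0 + 1 ≤ a → k - e2 ≤ c + 1 → k ≤ a + c →
    av B i i' a c = 0 := by
  have h0k : e0 + 1 ≤ k := by omega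
  intro i i' a c ha hc hsum
  rw [(ext_row h0k H0 i i' a (by omega)).2 c,
    ZRA h02 h2k H0 H2 i i' a (c + 1) ha (by omega) (by omega), neg_zero]

lemma sum_step (i i' : Fin n) (η : ℕ) (h0η : e0 ≤ η) (hη2 : η + 1 ≤ e2) :
    (∑ a ∈ Finset.range ((η + 1) + 1), ∑ b ∈ Finset.range (k - (η + 1)),
        X ^ ((η + 1) - a) * (X ^ (k - 1 - (η + 1) - b) * pv A B i i' a b))
      = ∑ a ∈ Finset.range (η + 1), ∑ b ∈ Finset.range (k - η),
          X ^ (η - a) * (X ^ (k - 1 - η - b) * pv A B i i' a b) := by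
  have h0k : e0 + 1 ≤ k := by omega
  have hL2 : (∑ b ∈ Finset.range (k - (η + 1)),
      X ^ ((η + 1) - (η + 1)) * (X ^ (k - 1 - (η + 1) - b) * pv A B i i' (η + 1) b))
      = -C (av A i i' (η + 1) (k - 1 - η)) := by
    simp only [Nat.sub_self, pow_zero, one_mul, pv]
    rw [show Finset.range (k - (η + 1)) = Finset.range ((k - 1 - (η + 1)) + 1) from by
      rw [show (k - 1 - (η + 1)) + 1 = k - (η + 1) by omega]]
    rw [aux_tel_build _ _ _ ((ext_row h0k H0 i i' (η + 1) (by omega)).1)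
      (fun y _ => (ext_row h0k H0 i i' (η + 1) (by omega)).2 y)]
    rw [(ext_row h0k H0 i i' (η + 1) (by omega)).2 (k - 1 - (η + 1))]
    rw [show k - 1 - (η + 1) + 1 = k - 1 - η by omega, map_neg]
  have hR2 : (∑ a ∈ Finset.range (η + 1),
      X ^ (η - a) * (X ^ (k - 1 - η - (k - (η + 1))) * pv A B i i' a (k - (η + 1))))
      = -C (av A i i' (η + 1) (k - 1 - η)) := by
    have hy : k - (η + 1) = k - 1 - η := by omega
    rw [hy, Nat.sub_self, pow_zero]
    simp only [one_mul, pv]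
    rw [aux_tel_build _ _ _ ((ext_col h2k H2 i i' (k - 1 - η) (by omega)).1)
      (fun y _ => (ext_col h2k H2 i i' (k - 1 - η) (by omega)).2 y)]
    rw [(ext_col h2k H2 i i' (k - 1 - η) (by omega)).2 η, map_neg]
  calc (∑ a ∈ Finset.range ((η + 1) + 1), ∑ b ∈ Finset.range (k - (η + 1)),
        X ^ ((η + 1) - a) * (X ^ (k - 1 - (η + 1) - b) * pv A B i i' a b))
      = (∑ a ∈ Finset.range (η + 1), ∑ b ∈ Finset.range (k - (η + 1)),
          X ^ ((η + 1) - a) * (X ^ (k - 1 - (η + 1) - b) * pv A B i i' a b))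
        + -C (av A i i' (η + 1) (k - 1 - η)) := by
        rw [Finset.sum_range_succ, hL2]
    _ = (∑ a ∈ Finset.range (η + 1), ∑ b ∈ Finset.range (k - (η + 1)),
          X ^ (η - a) * (X ^ (k - 1 - η - b) * pv A B i i' a b))
        + -C (av A i i' (η + 1) (k - 1 - η)) := by
        congr 1
        refine Finset.sum_congr rfl fun a ha => Finset.sum_congr rfl fun b hb => ?_
        have ha' : a < η + 1 := Finset.mem_range.1 ha
        have hb' : b < k - (η + 1) := Finset.mem_range.1 hb
        rw [show (η + 1) - a = (η - a) + 1 by omega,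
          show k - 1 - η - b = (k - 1 - (η + 1) - b) + 1 by omega, pow_succ, pow_succ]
        ring
    _ = ∑ a ∈ Finset.range (η + 1), ∑ b ∈ Finset.range (k - η),
          X ^ (η - a) * (X ^ (k - 1 - η - b) * pv A B i i' a b) := by
        rw [show Finset.range (k - η) = Finset.range ((k - (η + 1)) + 1) from by
          rw [show (k - (η + 1)) + 1 = k - η by omega]]
        rw [Finset.sum_congr rfl fun a _ => Finset.sum_range_succ
          (fun b => X ^ (η - a) * (X ^ (k - 1 - η - b) * pv A B i i' a b)) (k - (η + 1))]
        rw [Finset.sum_add_distrib, hR2]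

lemma sum_const (i i' : Fin n) (e1 : ℕ) (h01 : e0 ≤ e1) (h12 : e1 ≤ e2) :
    (∑ a ∈ Finset.range (e1 + 1), ∑ b ∈ Finset.range (k - e1),
        X ^ (e1 - a) * (X ^ (k - 1 - e1 - b) * pv A B i i' a b))
      = ∑ a ∈ Finset.range (e0 + 1), ∑ b ∈ Finset.range (k - e0),
          X ^ (e0 - a) * (X ^ (k - 1 - e0 - b) * pv A B i i' a b) := by
  have hd : ∀ d : ℕ, e0 + d ≤ e2 →
      (∑ a ∈ Finset.range ((e0 + d) + 1), ∑ b ∈ Finset.range (k - (e0 + d)),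
        X ^ ((e0 + d) - a) * (X ^ (k - 1 - (e0 + d) - b) * pv A B i i' a b))
      = ∑ a ∈ Finset.range (e0 + 1), ∑ b ∈ Finset.range (k - e0),
          X ^ (e0 - a) * (X ^ (k - 1 - e0 - b) * pv A B i i' a b) := by
    intro d
    induction d with
    | zero => intro _; rfl
    | succ d ih =>
      intro hle
      rw [show e0 + (d + 1) = (e0 + d) + 1 by omega]
      rw [sum_step h02 h2k H0 H2 i i' (e0 + d) (by omega) (by omega)]
      exact ih (by omega)
  have := hd (e1 - e0) (by omega)
  rw [show e0 + (e1 - e0) = e1 by omega] at this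
  exact this

lemma interval (e1 : ℕ) (h01 : e0 ≤ e1) (h12 : e1 ≤ e2) :
    Eleft n k e1 * pencilM A B * Eright n k e1 = GRHS n k e1 α Pm := by
  have h0k : e0 + 1 ≤ k := by omega
  have he1k : e1 + 1 ≤ k := by omega
  refine Matrix.ext fun p q => ?_
  by_cases hp : (p.1 : ℕ) = 0 <;> by_cases hq : (q.1 : ℕ) = 0
  · -- (0,0) entry
    rw [entry_00 e1 p q hp hq]
    have hrhs : GRHS n k e1 α Pm p q = C α * Pm p.2 q.2 := by
      simp [GRHS, hp, hq, show q.1 = 0 by simpa using hq]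
    rw [hrhs, sum_const h02 h2k H0 H2 p.2 q.2 e1 h01 h12]
    exact ext_P h0k H0 p.2 q.2
  · -- (0, c)
    rw [entry_0c e1 p q hp hq]
    have hrhs : GRHS n k e1 α Pm p q = 0 := by simp [GRHS, hq, show q.1 ≠ 0 by simpa using hq]
    rw [hrhs]
    have hq1 : (q.1 : ℕ) < e1 + 1 := q.1.isLt
    set y := k - 1 - e1 + (q.1 : ℕ) with hy
    have hyge : k - e1 ≤ y := by omega
    simp only [pv]
    rw [aux_tel_build _ _ _ ((ext_col h2k H2 p.2 q.2 y (by omega)).1)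
      (fun x _ => (ext_col h2k H2 p.2 q.2 y (by omega)).2 x)]
    rw [(ext_col h2k H2 p.2 q.2 y (by omega)).2 e1]
    rw [ZRA h02 h2k H0 H2 p.2 q.2 (e1 + 1) y (by omega) (by omega) (by omega)]
    simp
  · -- (r, 0)
    rw [entry_r0 e1 p q hp hq]
    have hrhs : GRHS n k e1 α Pm p q = 0 := by simp [GRHS, hp]
    rw [hrhs]
    have hp1 : (p.1 : ℕ) < k - e1 := p.1.isLt
    set x := e1 + (p.1 : ℕ) with hx
    rw [show Finset.range (k - e1) = Finset.range ((k - 1 - e1) + 1) from by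
      rw [show (k - 1 - e1) + 1 = k - e1 by omega]]
    simp only [pv]
    rw [aux_tel_build _ _ _ ((ext_row h0k H0 p.2 q.2 x (by omega)).1)
      (fun y _ => (ext_row h0k H0 p.2 q.2 x (by omega)).2 y)]
    rw [ZRB h02 h2k H0 H2 p.2 q.2 x (k - 1 - e1) (by omega) (by omega) (by omega)]
    simp
  · -- (r, c)
    rw [entry_rc e1 p q hp hq]
    have hrhs : GRHS n k e1 α Pm p q = 0 := by simp [GRHS, hp]
    rw [hrhs]
    have hp1 : (p.1 : ℕ) < k - e1 := p.1.isLt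
    have hq1 : (q.1 : ℕ) < e1 + 1 := q.1.isLt
    unfold pv
    rw [ZRA h02 h2k H0 H2 p.2 q.2 (e1 + (p.1 : ℕ)) (k - 1 - e1 + (q.1 : ℕ))
        (by omega) (by omega) (by omega),
      ZRB h02 h2k H0 H2 p.2 q.2 (e1 + (p.1 : ℕ)) (k - 1 - e1 + (q.1 : ℕ))
        (by omega) (by omega) (by omega)]
    simp

end Interval

section Witness

variable (j : ℕ)

/-- witness A: single block at `(0, j)`, entry `(0,0)` -/
def Aw : Matrix (Fin k × Fin n) (Fin k × Fin n) ℝ :=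
  Matrix.of fun p q =>
    if (p.1 : ℕ) = 0 ∧ (q.1 : ℕ) = j ∧ (p.2 : ℕ) = 0 ∧ (q.2 : ℕ) = 0 then 1 else 0

/-- witness B: single block at `(0, j-1)`, entry `(0,0)`, value `-1` -/
def Bw : Matrix (Fin k × Fin n) (Fin k × Fin n) ℝ :=
  Matrix.of fun p q =>
    if (p.1 : ℕ) = 0 ∧ (q.1 : ℕ) = j - 1 ∧ (p.2 : ℕ) = 0 ∧ (q.2 : ℕ) = 0 then -1 else 0

lemma witness_av (m : ℕ) (hm : m < k) (v : ℝ) (i i' : Fin n) (a b : ℕ) :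
    av (Matrix.of fun p q : Fin k × Fin n =>
        if (p.1 : ℕ) = 0 ∧ (q.1 : ℕ) = m ∧ (p.2 : ℕ) = 0 ∧ (q.2 : ℕ) = 0 then v else 0)
      i i' a b
      = if a = 0 ∧ b = m ∧ (i : ℕ) = 0 ∧ (i' : ℕ) = 0 then v else 0 := by
  unfold av
  by_cases h : a < k ∧ b < k
  · rw [dif_pos h]
    simp only [Matrix.of_apply]
  · rw [dif_neg h]
    rw [if_neg (by omega)]

lemma wit_pv (hj : j < k) (hj1 : 1 ≤ j) (i i' : Fin n) (a b : ℕ) :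
    pv (Aw (n := n) (k := k) j) (Bw (n := n) (k := k) j) i i' a b
      = if a = 0 ∧ (i : ℕ) = 0 ∧ (i' : ℕ) = 0 then
          ((if b = j then X else 0) + (if b = j - 1 then -1 else 0)) else 0 := by
  unfold pv Aw Bw
  rw [witness_av j hj 1 i i' a b, witness_av (j - 1) (by omega) (-1) i i' a b]
  split_ifs <;>
    first
      | (exfalso; omega)
      | simp
      | (simp [map_neg]; ring)

lemma wit_mem (hj1 : 1 ≤ j) (η : ℕ) (hη : η + 1 ≤ k) (hjε : j ≤ k - 1 - η)
    (Pm : Matrix (Fin n) (Fin n) (Polynomial ℝ)) :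
    Eleft n k η * pencilM (Aw (n := n) (k := k) j) (Bw (n := n) (k := k) j) * Eright n k η
      = GRHS n k η 0 Pm := by
  have hjk : j < k := by omega
  refine Matrix.ext fun p q => ?_
  by_cases hp : (p.1 : ℕ) = 0 <;> by_cases hq : (q.1 : ℕ) = 0
  · rw [entry_00 η p q hp hq]
    have hrhs : GRHS n k η 0 Pm p q = 0 := by
      simp [GRHS, hp, hq]
    rw [hrhs]
    by_cases hii : (p.2 : ℕ) = 0 ∧ (q.2 : ℕ) = 0
    case neg =>
      refine Finset.sum_eq_zero fun a _ => Finset.sum_eq_zero fun b _ => ?_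
      rw [wit_pv j hjk hj1, if_neg (by tauto)]
      simp
    case pos =>
      have hpv : ∀ a b : ℕ, pv (Aw (n := n) (k := k) j) (Bw (n := n) (k := k) j) p.2 q.2 a b
          = if a = 0 then ((if b = j then X else 0) + (if b = j - 1 then (-1 : Polynomial ℝ) else 0)) else 0 := by
        intro a b
        rw [wit_pv j hjk hj1]
        by_cases h2 : a = 0
        · rw [if_pos ⟨h2, hii.1, hii.2⟩, if_pos h2]
        · rw [if_neg (by tauto), if_neg h2]
      simp only [hpv]
      rw [Finset.sum_eq_single 0]
      · simp only [↓reduceIte]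
        have hsplit : ∀ b : ℕ, X ^ (η - 0) * (X ^ (k - 1 - η - b) *
            ((if b = j then X else 0) + (if b = j - 1 then (-1 : Polynomial ℝ) else 0)))
            = (if b = j then X ^ η * (X ^ (k - 1 - η - b) * X) else 0)
              + (if b = j - 1 then -(X ^ η * X ^ (k - 1 - η - b)) else 0) := by
          intro b
          have hne : ¬ j = j - 1 := by omega
          have hne' : ¬ j - 1 = j := by omega
          by_cases h3 : b = j <;> by_cases h4 : b = j - 1 <;>
            simp [h3, h4, hne, hne'] <;> first | (exfalso; omega) | ring
        rw [Finset.sum_congr rfl fun b _ => hsplit b, Finset.sum_add_distrib]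
        rw [Finset.sum_ite_eq' (Finset.range (k - η)) j
            (fun b => X ^ η * (X ^ (k - 1 - η - b) * X)),
          Finset.sum_ite_eq' (Finset.range (k - η)) (j - 1)
            (fun b => -(X ^ η * X ^ (k - 1 - η - b)))]
        rw [if_pos (Finset.mem_range.2 (by omega)), if_pos (Finset.mem_range.2 (by omega))]
        have e1 : (X : Polynomial ℝ) ^ η * (X ^ (k - 1 - η - j) * X) = X ^ (k - j) := by
          rw [← pow_succ, ← pow_add]
          congr 1
          omega
        have e2 : (X : Polynomial ℝ) ^ η * X ^ (k - 1 - η - (j - 1)) = X ^ (k - j) := by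
          rw [← pow_add]
          congr 1
          omega
        rw [e1, e2, add_neg_cancel]
      · intro a _ ha
        simp [ha]
      · intro h
        exact absurd (Finset.mem_range.2 (by omega)) h
  · rw [entry_0c η p q hp hq]
    have hrhs : GRHS n k η 0 Pm p q = 0 := by simp [GRHS, hq]
    rw [hrhs]
    refine Finset.sum_eq_zero fun a _ => ?_
    have hb1 : ¬(k - 1 - η + (q.1 : ℕ) = j) := by omega
    have hb2 : ¬(k - 1 - η + (q.1 : ℕ) = j - 1) := by omega
    rw [wit_pv j hjk hj1]
    simp [hb1, hb2]
  · rw [entry_r0 η p q hp hq]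
    have hrhs : GRHS n k η 0 Pm p q = 0 := by simp [GRHS, hp]
    rw [hrhs]
    refine Finset.sum_eq_zero fun b _ => ?_
    rw [wit_pv j hjk hj1, if_neg (by rintro ⟨ha, _⟩; omega), mul_zero]
  · rw [entry_rc η p q hp hq]
    have hrhs : GRHS n k η 0 Pm p q = 0 := by simp [GRHS, hp]
    rw [hrhs, wit_pv j hjk hj1, if_neg (by rintro ⟨ha, _⟩; omega)]

lemma wit_notmem (hj1 : 1 ≤ j) (hjk : 2 * j + 1 ≤ k) (hn : 1 ≤ n) (α : ℝ)
    (Pm : Matrix (Fin n) (Fin n) (Polynomial ℝ))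
    (H : Eleft n k (k - j) * pencilM (Aw (n := n) (k := k) j) (Bw (n := n) (k := k) j)
        * Eright n k (k - j) = GRHS n k (k - j) α Pm) : False := by
  have hjk' : j < k := by omega
  have hp0 : 0 < k - (k - j) := by omega
  have hq1 : 1 < (k - j) + 1 := by omega
  have hn0 : 0 < n := hn
  have heq := congrFun (congrFun H (⟨0, hp0⟩, ⟨0, hn0⟩)) (⟨1, hq1⟩, ⟨0, hn0⟩)
  rw [entry_0c (k - j) _ _ (by simp) (by simp)] at heq
  have hrhs : GRHS n k (k - j) α Pm (⟨0, hp0⟩, ⟨0, hn0⟩) (⟨1, hq1⟩, ⟨0, hn0⟩) = 0 := by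
    simp [GRHS]
  rw [hrhs] at heq
  have hcol : k - 1 - (k - j) + ((⟨1, hq1⟩ : Fin ((k - j) + 1)) : ℕ) = j := by simp; omega
  rw [hcol] at heq
  have hpv : ∀ a : ℕ, pv (Aw (n := n) (k := k) j) (Bw (n := n) (k := k) j)
      (⟨0, hn0⟩ : Fin n) (⟨0, hn0⟩ : Fin n) a j
      = if a = 0 then X else 0 := by
    intro a
    rw [wit_pv j hjk' hj1]
    have hne : ¬ j = j - 1 := by omega
    by_cases h2 : a = 0
    · simp [h2, hne]
    · simp [h2]
  simp only [hpv] at heq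
  rw [Finset.sum_congr rfl (fun a _ => by
      rw [show (X ^ (k - j - a) * if a = 0 then X else 0)
        = if a = 0 then X ^ (k - j - a) * X else 0 from by split_ifs <;> simp])] at heq
  rw [Finset.sum_ite_eq' (Finset.range ((k - j) + 1)) 0
      (fun a => X ^ (k - j - a) * X)] at heq
  rw [if_pos (Finset.mem_range.2 (by omega))] at heq
  have : (X : Polynomial ℝ) ^ (k - j - 0) * X ≠ 0 := by
    rw [← pow_succ]
    exact pow_ne_zero _ X_ne_zero
  exact this heq

end Witness

end Entry


theorem stmt14 (n k : ℕ) (hn : 1 ≤ n) (hk : 2 ≤ k)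
    (Pc : ℕ → Matrix (Fin n) (Fin n) ℝ) (hdeg : Pc k ≠ 0) :
    ∀ j : ℕ, 1 ≤ j → j < (k + 1) / 2 →
      {p : Matrix (Fin k × Fin n) (Fin k × Fin n) ℝ ×
          Matrix (Fin k × Fin n) (Fin k × Fin n) ℝ |
          memG n k (j - 1) Pc p ∧ memG n k (k - j) Pc p} ⊂
        {p | memG n k j Pc p ∧ memG n k (k - (j + 1)) Pc p} := by
  intro j hj1 hj2
  have h2j : 2 * j + 1 ≤ k := by omega
  have hsub : {p : Matrix (Fin k × Fin n) (Fin k × Fin n) ℝ ×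
          Matrix (Fin k × Fin n) (Fin k × Fin n) ℝ |
          memG n k (j - 1) Pc p ∧ memG n k (k - j) Pc p} ⊆
        {p | memG n k j Pc p ∧ memG n k (k - (j + 1)) Pc p} := by
    rintro p ⟨⟨α, H0⟩, ⟨β, H2⟩⟩
    have h02 : j - 1 ≤ k - j := by omega
    have h2k : (k - j) + 1 ≤ k := by omega
    exact ⟨⟨α, interval h02 h2k H0 H2 j (by omega) (by omega)⟩,
           ⟨α, interval h02 h2k H0 H2 (k - (j + 1)) (by omega) (by omega)⟩⟩
  rw [Set.ssubset_iff_of_subset hsub]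
  refine ⟨(Aw (n := n) (k := k) j, Bw (n := n) (k := k) j), ⟨⟨0, ?_⟩, ⟨0, ?_⟩⟩, ?_⟩
  · exact wit_mem j hj1 j (by omega) (by omega) _
  · exact wit_mem j hj1 (k - (j + 1)) (by omega) (by omega) _
  · rintro ⟨-, ⟨α, H⟩⟩
    exact wit_notmem j hj1 h2j hn α _ H
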